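/- Addition theorem for Kummer's function: M(a,b,x+y) = Σ_{n≥0} ((a)_n y^n)/((b)_n n!) · M(a+n, b+n, x), with absolute convergence for all complex x, y when b is not a nonpositive integer. -/

import Mathlib

/-- The Pochhammer symbol (rising factorial) for complex arguments. -/
noncomputable def risingC (a : ℂ) (n : ℕ) : ℂ := ∏ i ∈ Finset.range n, (a + i)

/-- Kummer's confluent hypergeometric function of the first kind. -/
noncomputable def kummerM (a b z : ℂ) : ℂ :=
  ∑' n : ℕ, risingC a n / (risingC b n * n.factorial) * z ^ n

lemma risingC_succ (a : ℂ) (n : ℕ) : risingC a (n + 1) = risingC a n * (a + n) :=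
  Finset.prod_range_succ _ _

lemma risingC_add (a : ℂ) (n m : ℕ) :
    risingC a (n + m) = risingC a n * risingC (a + n) m := by
  induction m with
  | zero => simp [risingC]
  | succ m ih =>
    rw [← add_assoc, risingC_succ, risingC_succ, ih]
    push_cast
    ring

lemma risingC_ne_zero {b : ℂ} (hb : ∀ n : ℕ, b ≠ -(n : ℂ)) (n : ℕ) : risingC b n ≠ 0 := by
  refine Finset.prod_ne_zero_iff.2 fun i _ h => hb i ?_
  linear_combination h

lemma exists_ratio_bound (a b : ℂ) (hb : ∀ n : ℕ, b ≠ -(n : ℂ)) :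
    ∃ A : ℝ, 0 ≤ A ∧ ∀ i : ℕ, ‖a + (i : ℂ)‖ ≤ A * ‖b + (i : ℂ)‖ := by
  set N : ℕ := ⌈‖a - b‖ + ‖b‖⌉₊ with hN
  set A : ℝ := 2 + ∑ i ∈ Finset.range N, ‖a + (i : ℂ)‖ / ‖b + (i : ℂ)‖ with hA
  have hsum0 : 0 ≤ ∑ i ∈ Finset.range N, ‖a + (i : ℂ)‖ / ‖b + (i : ℂ)‖ :=
    Finset.sum_nonneg fun i _ => by positivity
  have hA0 : (0 : ℝ) ≤ A := by positivity
  refine ⟨A, hA0, fun i => ?_⟩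
  have hbi : (0 : ℝ) < ‖b + (i : ℂ)‖ := by
    rw [norm_pos_iff]
    intro h
    exact hb i (by linear_combination h)
  by_cases hiN : i < N
  · have h1 : ‖a + (i : ℂ)‖ / ‖b + (i : ℂ)‖ ≤ A := by
      have := Finset.single_le_sum (f := fun j : ℕ => ‖a + (j : ℂ)‖ / ‖b + (j : ℂ)‖)
        (fun j _ => by positivity) (Finset.mem_range.2 hiN)
      rw [hA]; linarith
    calc ‖a + (i : ℂ)‖ = ‖a + (i : ℂ)‖ / ‖b + (i : ℂ)‖ * ‖b + (i : ℂ)‖ :=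
          (div_mul_cancel₀ _ hbi.ne').symm
      _ ≤ A * ‖b + (i : ℂ)‖ := mul_le_mul_of_nonneg_right h1 hbi.le
  · have hi : (N : ℝ) ≤ (i : ℝ) := by exact_mod_cast Nat.not_lt.1 hiN
    have h2 : ‖a - b‖ + ‖b‖ ≤ (i : ℝ) := le_trans (Nat.le_ceil _) hi
    have h3 : (i : ℝ) - ‖b‖ ≤ ‖b + (i : ℂ)‖ := by
      have h4 : ‖(i : ℂ)‖ ≤ ‖b + (i : ℂ)‖ + ‖b‖ := by
        calc ‖(i : ℂ)‖ = ‖b + (i : ℂ) - b‖ := by rw [add_sub_cancel_left]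
          _ ≤ ‖b + (i : ℂ)‖ + ‖b‖ := norm_sub_le _ _
      have h4' : ‖(i : ℂ)‖ = (i : ℝ) := Complex.norm_natCast i
      linarith
    have h5 : ‖a + (i : ℂ)‖ ≤ ‖b + (i : ℂ)‖ + ‖a - b‖ := by
      calc ‖a + (i : ℂ)‖ = ‖b + (i : ℂ) + (a - b)‖ := by
            rw [show a + (i : ℂ) = b + (i : ℂ) + (a - b) by ring]
        _ ≤ ‖b + (i : ℂ)‖ + ‖a - b‖ := norm_add_le _ _
    have h6 : ‖a + (i : ℂ)‖ ≤ 2 * ‖b + (i : ℂ)‖ := by linarith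
    calc ‖a + (i : ℂ)‖ ≤ 2 * ‖b + (i : ℂ)‖ := h6
      _ ≤ A * ‖b + (i : ℂ)‖ := by
          apply mul_le_mul_of_nonneg_right _ hbi.le
          rw [hA]; linarith

lemma norm_risingC_le (a b : ℂ) {A : ℝ} (hA : 0 ≤ A)
    (h : ∀ i : ℕ, ‖a + (i : ℂ)‖ ≤ A * ‖b + (i : ℂ)‖) (k : ℕ) :
    ‖risingC a k‖ ≤ A ^ k * ‖risingC b k‖ := by
  rw [risingC, risingC, norm_prod, norm_prod]
  calc ∏ i ∈ Finset.range k, ‖a + (i : ℂ)‖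
      ≤ ∏ i ∈ Finset.range k, (A * ‖b + (i : ℂ)‖) :=
        Finset.prod_le_prod (fun i _ => norm_nonneg _) (fun i _ => h i)
    _ = A ^ k * ∏ i ∈ Finset.range k, ‖b + (i : ℂ)‖ := by
        rw [Finset.prod_mul_distrib, Finset.prod_const, Finset.card_range]

lemma summable_coeff (a b : ℂ) (hb : ∀ n : ℕ, b ≠ -(n : ℂ)) (r : ℝ) (hr : 0 ≤ r) :
    Summable fun k : ℕ =>
      ‖risingC a k / (risingC b k * (k.factorial : ℂ))‖ * r ^ k := by
  obtain ⟨A, hA0, hA⟩ := exists_ratio_bound a b hb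
  refine Summable.of_nonneg_of_le (fun k => by positivity) (fun k => ?_)
    (Real.summable_pow_div_factorial (A * r))
  have hbk : (0 : ℝ) < ‖risingC b k‖ := norm_pos_iff.2 (risingC_ne_zero hb k)
  have hfk : (0 : ℝ) < (k.factorial : ℝ) := by exact_mod_cast k.factorial_pos
  have hra := norm_risingC_le a b hA0 hA k
  have h1 : ‖risingC a k / (risingC b k * (k.factorial : ℂ))‖
      = ‖risingC a k‖ / (‖risingC b k‖ * (k.factorial : ℝ)) := by
    rw [norm_div, norm_mul]
    norm_num
  rw [h1, mul_pow]
  rw [div_mul_eq_mul_div, div_le_div_iff₀ (by positivity) hfk]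
  have hApow : (0 : ℝ) ≤ A ^ k := pow_nonneg hA0 k
  have hrpow : (0 : ℝ) ≤ r ^ k := pow_nonneg hr k
  nlinarith [mul_le_mul_of_nonneg_right hra hrpow, mul_pos hbk hfk]

set_option maxHeartbeats 2000000 in
/-- Addition theorem for Kummer's function:
`M(a,b,x+y) = Σ_{n≥0} ((a)_n y^n)/((b)_n n!) · M(a+n, b+n, x)`, with absolute
convergence, whenever `b` is not a nonpositive integer. -/
theorem kummer_addition (a b x y : ℂ) (hb : ∀ n : ℕ, b ≠ -(n : ℂ)) :
    (Summable fun n : ℕ =>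
      ‖risingC a n * y ^ n / (risingC b n * n.factorial) * kummerM (a + n) (b + n) x‖) ∧
    kummerM a b (x + y) =
      ∑' n : ℕ, risingC a n * y ^ n / (risingC b n * n.factorial) *
        kummerM (a + n) (b + n) x := by
  classical
  have hbn : ∀ n m : ℕ, b + (n : ℂ) ≠ -(m : ℂ) := by
    intro n m h
    exact hb (n + m) (by push_cast; linear_combination h)
  set c : ℕ → ℂ := fun k => risingC a k / (risingC b k * (k.factorial : ℂ)) with hc
  set F : ℕ × ℕ → ℂ := fun p =>
    risingC a p.1 * y ^ p.1 / (risingC b p.1 * (p.1.factorial : ℂ)) *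
      (risingC (a + p.1) p.2 / (risingC (b + p.1) p.2 * (p.2.factorial : ℂ)) * x ^ p.2)
    with hF
  -- key algebraic identity
  have key : ∀ n m : ℕ, F (n, m) = c (n + m) * ((n + m).choose n : ℂ) * y ^ n * x ^ m := by
    intro n m
    have hfact : ((n + m).factorial : ℂ)
        = ((n + m).choose n : ℂ) * (n.factorial : ℂ) * (m.factorial : ℂ) := by
      have hN : (n + m).choose n * n.factorial * m.factorial = (n + m).factorial := by
        rw [Nat.choose_symm_add]
        exact Nat.add_choose_mul_factorial_mul_factorial n m
      exact_mod_cast hN.symm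
    have h1 : risingC b n ≠ 0 := risingC_ne_zero hb n
    have h2 : risingC (b + n) m ≠ 0 := risingC_ne_zero (hbn n) m
    have h3 : (n.factorial : ℂ) ≠ 0 := by exact_mod_cast n.factorial_ne_zero
    have h4 : (m.factorial : ℂ) ≠ 0 := by exact_mod_cast m.factorial_ne_zero
    have h5 : ((n + m).choose n : ℂ) ≠ 0 :=
      Nat.cast_ne_zero.2 (Nat.choose_pos (Nat.le_add_right n m)).ne'
    simp only [hF, hc, risingC_add a n m, risingC_add b n m, hfact]
    field_simp
  have keyN : ∀ n m : ℕ,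
      ‖F (n, m)‖ = ‖c (n + m)‖ * ((n + m).choose n : ℝ) * ‖y‖ ^ n * ‖x‖ ^ m := by
    intro n m
    rw [key n m]
    simp [norm_mul, norm_pow]
  -- fiberwise (antidiagonal) sums of norms
  have hsum_diag : ∀ k : ℕ,
      ∑ p ∈ Finset.HasAntidiagonal.antidiagonal k, ‖F p‖ = ‖c k‖ * (‖y‖ + ‖x‖) ^ k := by
    intro k
    rw [Finset.Nat.sum_antidiagonal_eq_sum_range_succ_mk]
    rw [add_pow]
    rw [Finset.mul_sum]
    refine Finset.sum_congr rfl fun i hi => ?_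
    have hik : i ≤ k := Nat.lt_succ_iff.1 (Finset.mem_range.1 hi)
    have hik' : i + (k - i) = k := Nat.add_sub_cancel' hik
    rw [keyN i (k - i), hik']
    ring
  have hg : Summable fun k : ℕ => ‖c k‖ * (‖y‖ + ‖x‖) ^ k :=
    summable_coeff a b hb (‖y‖ + ‖x‖) (by positivity)
  -- summability of the norms over ℕ × ℕ
  have hfiberN : ∀ k : ℕ,
      (∑' p : (Finset.HasAntidiagonal.antidiagonal k : Finset (ℕ × ℕ)), ‖F (p : ℕ × ℕ)‖)
        = ‖c k‖ * (‖y‖ + ‖x‖) ^ k := by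
    intro k
    rw [tsum_fintype, Finset.sum_coe_sort (Finset.HasAntidiagonal.antidiagonal k) (fun p => ‖F p‖)]
    exact hsum_diag k
  have hFnorm : Summable fun p : ℕ × ℕ => ‖F p‖ := by
    rw [← Finset.HasAntidiagonal.sigmaAntidiagonalEquivProd.summable_iff]
    apply (summable_sigma_of_nonneg (fun _ => norm_nonneg _)).2
    constructor
    · intro k
      exact (hasSum_fintype _).summable
    · exact hg.congr fun k => (hfiberN k).symm
  have hFsum : Summable F := hFnorm.of_norm
  -- rows: the inner series gives kummerM
  have hrow : ∀ n : ℕ,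
      risingC a n * y ^ n / (risingC b n * (n.factorial : ℂ)) * kummerM (a + n) (b + n) x
        = ∑' m : ℕ, F (n, m) := by
    intro n
    rw [kummerM]
    exact (tsum_mul_left).symm
  -- part 1: summability
  have hrowNorm : Summable fun n : ℕ => ∑' m : ℕ, ‖F (n, m)‖ :=
    ((summable_prod_of_nonneg (fun _ => norm_nonneg _)).1 hFnorm).2
  have part1 : Summable fun n : ℕ =>
      ‖risingC a n * y ^ n / (risingC b n * (n.factorial : ℂ)) *
        kummerM (a + n) (b + n) x‖ := by
    refine Summable.of_nonneg_of_le (fun n => norm_nonneg _) (fun n => ?_) hrowNorm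
    rw [hrow n]
    exact norm_tsum_le_tsum_norm (hFnorm.prod_factor n)
  refine ⟨part1, ?_⟩
  -- part 2: the equality
  have step1 : kummerM a b (x + y) = ∑' k : ℕ, ∑ p ∈ Finset.HasAntidiagonal.antidiagonal k, F p := by
    rw [kummerM]
    refine tsum_congr fun k => ?_
    rw [Finset.Nat.sum_antidiagonal_eq_sum_range_succ_mk]
    have hxy : (x + y) ^ k = ∑ i ∈ Finset.range (k + 1), y ^ i * x ^ (k - i) * (k.choose i : ℂ) := by
      rw [add_comm x y, add_pow]
    rw [hxy, Finset.mul_sum]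
    refine Finset.sum_congr rfl fun i hi => ?_
    have hik : i ≤ k := Nat.lt_succ_iff.1 (Finset.mem_range.1 hi)
    have hik' : i + (k - i) = k := Nat.add_sub_cancel' hik
    rw [key i (k - i), hik']
    ring
  have hFsigma : Summable fun σ : Σ k : ℕ, Finset.HasAntidiagonal.antidiagonal k =>
      F (σ.2 : ℕ × ℕ) :=
    Finset.HasAntidiagonal.sigmaAntidiagonalEquivProd.summable_iff.2 hFsum
  have step2 : (∑' k : ℕ, ∑ p ∈ Finset.HasAntidiagonal.antidiagonal k, F p) = ∑' p : ℕ × ℕ, F p := by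
    have hfin : ∀ k : ℕ, (∑ p ∈ Finset.HasAntidiagonal.antidiagonal k, F p)
        = ∑' p : (Finset.HasAntidiagonal.antidiagonal k : Finset (ℕ × ℕ)), F (p : ℕ × ℕ) := by
      intro k
      rw [tsum_fintype, Finset.sum_coe_sort (Finset.HasAntidiagonal.antidiagonal k) F]
    calc (∑' k : ℕ, ∑ p ∈ Finset.HasAntidiagonal.antidiagonal k, F p)
        = ∑' k : ℕ, ∑' p : (Finset.HasAntidiagonal.antidiagonal k : Finset (ℕ × ℕ)), F (p : ℕ × ℕ) :=
          tsum_congr hfin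
      _ = ∑' σ : Σ k : ℕ, Finset.HasAntidiagonal.antidiagonal k, F (σ.2 : ℕ × ℕ) :=
          (Summable.tsum_sigma' (fun k => (hasSum_fintype _).summable) hFsigma).symm
      _ = ∑' p : ℕ × ℕ, F p :=
          Finset.HasAntidiagonal.sigmaAntidiagonalEquivProd.tsum_eq (F : ℕ × ℕ → ℂ)
  have step3 : (∑' p : ℕ × ℕ, F p) = ∑' n : ℕ, ∑' m : ℕ, F (n, m) :=
    Summable.tsum_prod' hFsum hFsum.prod_factor
  rw [step1, step2, step3]
  exact tsum_congr fun n => (hrow n).symm
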